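/- Every countably presented flat module has projective dimension at most 1. -/

import Mathlib

def IsFlatModule (R M : Type*) [Ring R] [AddCommGroup M] [Module R M] : Prop :=
  ∀ (k : ℕ) (r : Fin k → R) (m : Fin k → M), (∑ i, r i • m i) = 0 →
    ∃ (l : ℕ) (a : Fin k → Fin l → R) (y : Fin l → M),
      (∀ i, m i = ∑ j, a i j • y j) ∧ ∀ j, (∑ i, r i * a i j) = 0

universe u v

namespace Stmt8Aux

open Submodule Set

variable {R : Type u} [Ring R] {M : Type v} [AddCommGroup M] [Module R M]

/-- `combo v` sends coefficients `c` to `∑ i, c i • v i`. -/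
def combo {k : ℕ} {A : Type*} [AddCommGroup A] [Module R A] (v : Fin k → A) :
    (Fin k → R) →ₗ[R] A where
  toFun c := ∑ i, c i • v i
  map_add' c d := by simp [add_smul, Finset.sum_add_distrib]
  map_smul' a c := by simp [mul_smul, Finset.smul_sum]

lemma combo_apply {k : ℕ} {A : Type*} [AddCommGroup A] [Module R A] (v : Fin k → A)
    (c : Fin k → R) : combo v c = ∑ i, c i • v i := rfl

lemma pi_single_decomp {k : ℕ} (c : Fin k → R) :
    c = ∑ i, c i • Pi.single (M := fun _ => R) i (1 : R) := by
  funext j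
  rw [Finset.sum_apply]
  rw [Finset.sum_eq_single j (fun b _ hb => by
      simp [Pi.single_apply, Ne.symm hb]) (by simp)]
  simp

lemma combo_single {k : ℕ} {A : Type*} [AddCommGroup A] [Module R A] (v : Fin k → A)
    (i : Fin k) : combo v (Pi.single (M := fun _ => R) i (1 : R)) = v i := by
  rw [combo_apply]
  rw [Finset.sum_eq_single i (fun b _ hb => by simp [Pi.single_apply, hb]) (by simp)]
  simp

lemma lin_eq_combo {k : ℕ} {A : Type*} [AddCommGroup A] [Module R A]
    (φ : (Fin k → R) →ₗ[R] A) (c : Fin k → R) :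
    φ c = ∑ i, c i • φ (Pi.single (M := fun _ => R) i (1 : R)) := by
  conv_lhs => rw [pi_single_decomp c]
  rw [map_sum]
  simp

/-- Kill one element of the kernel using flatness. -/
lemma kill_one (hflat : IsFlatModule R M) {k : ℕ} (p : (Fin k → R) →ₗ[R] M)
    (x : Fin k → R) (hx : p x = 0) :
    ∃ (l : ℕ) (T : (Fin k → R) →ₗ[R] (Fin l → R)) (p' : (Fin l → R) →ₗ[R] M),
      (∀ c, p' (T c) = p c) ∧ T x = 0 := by
  have h0 : (∑ i, x i • p (Pi.single i 1)) = 0 := by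
    rw [← lin_eq_combo p x, hx]
  obtain ⟨l, a, y, hy, ha⟩ := hflat k x (fun i => p (Pi.single i 1)) h0
  refine ⟨l, combo a, combo y, ?_, ?_⟩
  · intro c
    have h1 : (combo y) ((combo a) c) = ∑ i, c i • (combo y) (a i) := by
      rw [lin_eq_combo (combo a) c, map_sum]
      congr 1; funext i
      rw [map_smul, combo_single]
    rw [h1, lin_eq_combo p c]
    congr 1; funext i
    rw [hy i, combo_apply]
  · funext j
    have := ha j
    rw [combo_apply]
    simp only [Finset.sum_apply, Pi.smul_apply, smul_eq_mul]
    exact this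

/-- Kill a finite family of kernel elements using flatness, by iteration. -/
lemma kill_fam (hflat : IsFlatModule R M) :
    ∀ (n k : ℕ) (p : (Fin k → R) →ₗ[R] M) (xs : Fin n → (Fin k → R)),
      (∀ i, p (xs i) = 0) →
      ∃ (l : ℕ) (T : (Fin k → R) →ₗ[R] (Fin l → R)) (p' : (Fin l → R) →ₗ[R] M),
        (∀ c, p' (T c) = p c) ∧ ∀ i, T (xs i) = 0 := by
  intro n
  induction n with
  | zero =>
    intro k p xs _
    exact ⟨k, LinearMap.id, p, fun c => rfl, fun i => i.elim0⟩
  | succ n ih =>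
    intro k p xs h
    obtain ⟨l₁, T₁, p₁, h₁, hx₁⟩ := kill_one hflat p (xs 0) (h 0)
    obtain ⟨l, T₂, p', h₂, hkill⟩ := ih l₁ p₁ (fun i => T₁ (xs i.succ))
      (fun i => by rw [h₁]; exact h i.succ)
    refine ⟨l, T₂ ∘ₗ T₁, p', fun c => by simp [h₂, h₁], ?_⟩
    intro i
    refine Fin.cases ?_ (fun j => ?_) i
    · simp [hx₁]
    · exact hkill j

end Stmt8Aux
namespace Stmt8Aux

open Submodule Set

variable {R : Type u} [Ring R] {M : Type v} [AddCommGroup M] [Module R M]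

section Pres

variable {κ₀ : Type} (E : ℕ → κ₀)

/-- The countable family of basis vectors. -/
noncomputable def uu (i : ℕ) : κ₀ →₀ R := Finsupp.single (E i) 1

/-- Coordinates on the first `N` basis vectors. -/
noncomputable def sig (N : ℕ) : (Fin N → R) →ₗ[R] (κ₀ →₀ R) :=
  combo (fun i => uu E i.1)

lemma sig_apply (N : ℕ) (c : Fin N → R) :
    sig (R := R) E N c = ∑ i, c i • uu E (i : Fin N).1 := rfl

lemma span_uu_top (hE : Function.Surjective E) :
    span R (Set.range (uu E (R := R))) = ⊤ := by
  have hb := Module.Basis.span_eq (Finsupp.basisSingleOne (R := R) (ι := κ₀))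
  rw [eq_top_iff, ← hb]
  apply span_le.2
  rintro x ⟨i, rfl⟩
  obtain ⟨n, rfl⟩ := hE i
  exact subset_span ⟨n, by simp [uu, Finsupp.basisSingleOne]⟩

/-- Every element of the free module is a finite coordinate combination. -/
lemma exists_sig_preimage (hE : Function.Surjective E) (z : κ₀ →₀ R) :
    ∃ (N : ℕ) (c : Fin N → R), sig (R := R) E N c = z := by
  have hz : z ∈ span R (Set.range (uu E (R := R))) := by
    rw [span_uu_top E hE]; trivial
  obtain ⟨c, hc⟩ := Finsupp.mem_span_range_iff_exists_finsupp.1 hz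
  refine ⟨c.support.sup id + 1, fun i => c i.1, ?_⟩
  rw [sig_apply, Fin.sum_univ_eq_sum_range (fun i => c i • uu E i)]
  rw [← hc, Finsupp.sum_of_support_subset c ?_ _ (fun i _ => by simp)]
  intro i hi
  simp only [Finset.mem_range]
  exact Nat.lt_succ_of_le (Finset.le_sup (f := id) hi)

/-- Bounded decomposition in a countable spanning family. -/
lemma exists_bound_of_mem_span {A : Type*} [AddCommGroup A] [Module R A]
    (v : ℕ → A) {z : A} (hz : z ∈ span R (Set.range v)) :
    ∃ b : ℕ, z ∈ span R (v '' Set.Iio b) := by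
  obtain ⟨c, hc⟩ := Finsupp.mem_span_range_iff_exists_finsupp.1 hz
  refine ⟨c.support.sup id + 1, ?_⟩
  rw [← hc]
  refine Submodule.sum_mem _ (fun i hi => Submodule.smul_mem _ _ (subset_span ?_))
  exact ⟨i, Nat.lt_succ_of_le (Finset.le_sup (f := id) hi), rfl⟩

lemma span_image_Iio_mono {A : Type*} [AddCommGroup A] [Module R A]
    (v : ℕ → A) {b b' : ℕ} (h : b ≤ b') :
    span R (v '' Set.Iio b) ≤ span R (v '' Set.Iio b') :=
  span_mono (Set.image_mono (fun x hx => lt_of_lt_of_le hx h))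

/-- Canonical representative for the fiber of `E`. -/
noncomputable def canonNat (n : ℕ) : ℕ :=
  @Nat.find (fun t => E t = E n) (Classical.decPred _) ⟨n, rfl⟩

lemma canonNat_spec (n : ℕ) : E (canonNat E n) = E n :=
  @Nat.find_spec (fun t => E t = E n) (Classical.decPred _) ⟨n, rfl⟩

lemma canonNat_le (n : ℕ) : canonNat E n ≤ n :=
  @Nat.find_min' (fun t => E t = E n) (Classical.decPred _) ⟨n, rfl⟩ _ rfl

lemma canonNat_congr {a b : ℕ} (h : E a = E b) : canonNat E a = canonNat E b := by
  apply le_antisymm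
  · exact @Nat.find_min' (fun t => E t = E a) (Classical.decPred _) ⟨a, rfl⟩ _
      ((canonNat_spec E b).trans h.symm)
  · exact @Nat.find_min' (fun t => E t = E b) (Classical.decPred _) ⟨b, rfl⟩ _
      ((canonNat_spec E a).trans h)

lemma canonNat_idem (n : ℕ) : canonNat E (canonNat E n) = canonNat E n :=
  canonNat_congr E (canonNat_spec E n)

/-- Canonical representative, `Fin` version. -/
noncomputable def canonFin {N : ℕ} (s : Fin N) : Fin N :=
  ⟨canonNat E s.1, lt_of_le_of_lt (canonNat_le E s.1) s.2⟩

/-- Generators of the kernel of `sig`. -/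
noncomputable def vv (N : ℕ) (s : Fin N) : Fin N → R :=
  Pi.single s 1 - Pi.single (canonFin E s) 1

lemma sig_vv (N : ℕ) (s : Fin N) : sig (R := R) E N (vv E N s) = 0 := by
  rw [vv, map_sub]
  have h1 : sig (R := R) E N (Pi.single s 1) = uu E s.1 := combo_single _ s
  have h2 : sig (R := R) E N (Pi.single (canonFin E s) 1) = uu E (canonFin E s).1 :=
    combo_single _ _
  rw [h1, h2, sub_eq_zero]
  unfold uu
  congr 1
  exact (canonNat_spec E s.1).symm

/-- Kernel elements of `sig` decompose along the `vv` generators. -/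
lemma ker_sig_decomp {N : ℕ} (c : Fin N → R) (hc : sig (R := R) E N c = 0) :
    c = ∑ s, c s • vv E N s := by
  classical
  set c' : Fin N → R := c - ∑ s, c s • vv E N s with hc'
  have cval : ∀ i : Fin N, c' i
      = ∑ s ∈ Finset.univ.filter (fun s => canonFin E s = i), c s := by
    intro i
    simp only [hc', Pi.sub_apply, Finset.sum_apply, Pi.smul_apply, smul_eq_mul, vv,
      Pi.sub_apply, Pi.single_apply, mul_sub]
    rw [Finset.sum_sub_distrib]
    have e1 : (∑ s : Fin N, c s * if i = s then (1:R) else 0) = c i := by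
      rw [Finset.sum_eq_single i (fun b _ hb => by simp [Ne.symm hb]) (by simp)]
      simp
    have e2 : (∑ s : Fin N, c s * if i = canonFin E s then (1:R) else 0)
        = ∑ s ∈ Finset.univ.filter (fun s => canonFin E s = i), c s := by
      rw [Finset.sum_filter]
      congr 1; funext s
      by_cases h : canonFin E s = i
      · simp [h]
      · have : ¬ (i = canonFin E s) := fun hh => h hh.symm
        simp [h, this]
    rw [e1, e2]
    rw [sub_sub_cancel]
  have hfix : ∀ i : Fin N, canonFin E i ≠ i → c' i = 0 := by
    intro i hi
    rw [cval i, Finset.sum_eq_zero]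
    intro s hs
    exfalso
    simp only [Finset.mem_filter] at hs
    apply hi
    have hidem : canonNat E (canonNat E s.1) = canonNat E s.1 := canonNat_idem E s.1
    have hsv : canonNat E s.1 = i.1 := congrArg Fin.val hs.2
    have : canonNat E i.1 = i.1 := by rw [← hsv, hidem]
    exact Fin.ext this
  have hsig' : sig (R := R) E N c' = 0 := by
    rw [hc', map_sub, hc, map_sum, zero_sub, neg_eq_zero]
    rw [Finset.sum_eq_zero]
    intro s _
    rw [map_smul, sig_vv, smul_zero]
  have hall : ∀ i : Fin N, c' i = 0 := by
    intro i
    by_cases hfixi : canonFin E i = i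
    · have hterm : ∀ s : Fin N, ((c' s • uu E s.1 : κ₀ →₀ R)) (E i.1)
          = c' s * (if E s.1 = E i.1 then (1:R) else 0) := by
        intro s
        rw [Finsupp.smul_apply]
        unfold uu
        rw [Finsupp.single_apply, smul_eq_mul]
      have hev : (∑ s : Fin N, c' s * (if E s.1 = E i.1 then (1:R) else 0)) = 0 := by
        have h0 := congrArg (fun z : κ₀ →₀ R => z (E i.1)) hsig'
        simp only [Finsupp.coe_zero, Pi.zero_apply] at h0
        rw [sig_apply, Finsupp.finset_sum_apply] at h0
        rw [Finset.sum_congr rfl (fun s _ => (hterm s).symm)]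
        exact h0
      have hred : (∑ s : Fin N, c' s * (if E s.1 = E i.1 then (1:R) else 0)) = c' i := by
        rw [Finset.sum_eq_single i]
        · simp
        · intro b _ hb
          by_cases hEb : E b.1 = E i.1
          · by_cases hfb : canonFin E b = b
            · exfalso
              apply hb
              have h1 : canonNat E b.1 = canonNat E i.1 := canonNat_congr E hEb
              have hb' : canonNat E b.1 = b.1 := congrArg Fin.val hfb
              have hi' : canonNat E i.1 = i.1 := congrArg Fin.val hfixi
              exact Fin.ext (by omega)
            · simp [hfix b hfb]
          · simp [hEb]
        · simp
      rw [← hred]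
      exact hev
    · exact hfix i hfixi
  have hz : c - (∑ s, c s • vv E N s) = 0 := funext hall
  exact sub_eq_zero.1 hz

end Pres

end Stmt8Aux
namespace Stmt8Aux

open Submodule Set

variable {R : Type u} [Ring R] {M : Type v} [AddCommGroup M] [Module R M]

section Pres2

variable {κ₀ : Type} (E : ℕ → κ₀) (g : (κ₀ →₀ R) →ₗ[R] M) (r : ℕ → (κ₀ →₀ R))

lemma sig_trunc (c : ℕ →₀ R) (N : ℕ) (h : ∀ i ∈ c.support, i < N) :
    sig (R := R) E N (fun i => c i.1) = c.sum (fun i a => a • uu E i) := by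
  rw [sig_apply, Fin.sum_univ_eq_sum_range (fun i => c i • uu E i)]
  rw [Finsupp.sum_of_support_subset c (fun i hi => Finset.mem_range.2 (h i hi)) _
    (fun i _ => by simp)]

/-- The state of the construction: a finite free approximation `Fin k → R` of `M`,
with a coordinate lift `w` of its structure map `p`. -/
structure St : Type (max u v) where
  k : ℕ
  N : ℕ
  C : ℕ
  p : (Fin k → R) →ₗ[R] M
  w : (Fin k → R) →ₗ[R] (Fin N → R)
  hlift : ∀ x, g (sig E N (w x)) = p x
  hNr : ∀ j < C, ∃ c : Fin N → R, sig E N c = r j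

/-- Transition data between two states. -/
structure Trans (s s' : St E g r) : Type (max u v) where
  t : (Fin s.k → R) →ₗ[R] (Fin s'.k → R)
  comm : ∀ x, s'.p (t x) = s.p x
  compat : ∀ x, sig E s'.N (s'.w (t x)) - sig E s.N (s.w x) ∈ span R (r '' Set.Iio s'.C)
  kills : ∀ x, sig E s.N (s.w x) ∈ span R (r '' Set.Iio s.C) → t x = 0
  surj : ∀ i : Fin s.N, g (uu E i.1) ∈ LinearMap.range s'.p
  hC : s.C ≤ s'.C

/-- The initial (zero) state. -/
def base : St E g r where
  k := 0
  N := 0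
  C := 0
  p := 0
  w := 0
  hlift := by intro x; simp [sig_apply]
  hNr := by intro j hj; omega

/-- The inductive step of the construction. -/
lemma step (hflat : IsFlatModule R M) (hg : Function.Surjective g)
    (hE : Function.Surjective E)
    (hrk : ∀ j, g (r j) = 0)
    (hrs : LinearMap.ker g ≤ span R (Set.range r))
    (s : St E g r) (b : ℕ) :
    ∃ (s' : St E g r) (_ : Trans E g r s s'), b ≤ s'.N ∧ b ≤ s'.C := by
  classical
  set q : (Fin s.N → R) →ₗ[R] M := g ∘ₗ sig E s.N with hq
  -- the elements to kill
  have hrho : ∀ j : Fin s.C, ∃ c : Fin s.N → R, sig E s.N c = r j.1 :=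
    fun j => s.hNr j.1 j.2
  choose ρ hρ using hrho
  set tg : Fin (s.C + s.N) → (Fin s.N → R) := Fin.append ρ (vv E s.N) with htg
  have htg0 : ∀ i, q (tg i) = 0 := by
    intro i
    refine Fin.addCases (fun j => ?_) (fun j => ?_) i
    · have : tg (Fin.castAdd s.N j) = ρ j := by rw [htg, Fin.append_left]
      rw [this, hq, LinearMap.comp_apply, hρ, hrk]
    · have : tg (Fin.natAdd s.C j) = vv E s.N j := by rw [htg, Fin.append_right]
      rw [this, hq, LinearMap.comp_apply, sig_vv, map_zero]
  obtain ⟨l, T, p', hTp, hTkill⟩ := kill_fam hflat (s.C + s.N) s.N q tg htg0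
  have hTρ : ∀ j : Fin s.C, T (ρ j) = 0 := by
    intro j
    have := hTkill (Fin.castAdd s.N j)
    rwa [htg, Fin.append_left] at this
  have hTv : ∀ j : Fin s.N, T (vv E s.N j) = 0 := by
    intro j
    have := hTkill (Fin.natAdd s.C j)
    rwa [htg, Fin.append_right] at this
  -- lifts of the new generators
  have hzex : ∀ a : Fin l, ∃ z : κ₀ →₀ R, g z = p' (Pi.single a 1) := fun a => hg _
  choose z hz using hzex
  set W : (Fin l → R) →ₗ[R] (κ₀ →₀ R) := combo z with hW
  have hgW : ∀ c, g (W c) = p' c := by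
    intro c
    rw [hW, combo_apply, map_sum, lin_eq_combo p' c]
    congr 1; funext a
    rw [map_smul, hz]
  -- coordinates of the lifts
  have hcaex : ∀ a : Fin l, ∃ ca : ℕ →₀ R, (ca.sum fun i x => x • uu E i) = z a := by
    intro a
    refine Finsupp.mem_span_range_iff_exists_finsupp.1 ?_
    rw [span_uu_top E hE]; trivial
  choose ca hca using hcaex
  set N₁ : ℕ := Finset.univ.sup (fun a : Fin l => (ca a).support.sup id + 1) with hN₁
  -- corrections
  set D : (Fin s.k → R) →ₗ[R] (κ₀ →₀ R) :=
    (W ∘ₗ T ∘ₗ s.w) - ((sig E s.N) ∘ₗ s.w) with hD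
  have hDker : ∀ i : Fin s.k, D (Pi.single i 1) ∈ span R (Set.range r) := by
    intro i
    apply hrs
    rw [LinearMap.mem_ker, hD]
    simp only [LinearMap.sub_apply, LinearMap.comp_apply, map_sub]
    rw [hgW, hTp, hq, LinearMap.comp_apply]
    exact sub_self _
  have hBex : ∀ i : Fin s.k, ∃ bd : ℕ, D (Pi.single i 1) ∈ span R (r '' Set.Iio bd) :=
    fun i => exists_bound_of_mem_span r (hDker i)
  choose B hB using hBex
  set C' : ℕ := max (max b (s.C)) (Finset.univ.sup B) with hC'
  -- coordinates of the relations
  have hcrex : ∀ j : ℕ, ∃ cr : ℕ →₀ R, (cr.sum fun i x => x • uu E i) = r j := by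
    intro j
    refine Finsupp.mem_span_range_iff_exists_finsupp.1 ?_
    rw [span_uu_top E hE]; trivial
  choose cr hcr using hcrex
  set ν : ℕ → ℕ := fun j => (cr j).support.sup id + 1 with hν
  set N' : ℕ := max (max b N₁) ((Finset.range C').sup ν) with hN'
  -- the new coordinate lift
  set w' : (Fin l → R) →ₗ[R] (Fin N' → R) :=
    combo (fun a => (fun i : Fin N' => ca a i.1)) with hw'
  have hsig_vec : ∀ a : Fin l, sig (R := R) E N' (fun i : Fin N' => ca a i.1) = z a := by
    intro a
    rw [sig_trunc E (ca a) N']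
    · exact hca a
    · intro i hi
      calc i < (ca a).support.sup id + 1 := Nat.lt_succ_of_le (Finset.le_sup (f := id) hi)
      _ ≤ N₁ := Finset.le_sup (f := fun a : Fin l => (ca a).support.sup id + 1) (Finset.mem_univ a)
      _ ≤ N' := le_trans (le_max_right b N₁) (le_max_left _ _)
  have hsigw' : ∀ x, sig E N' (w' x) = W x := by
    intro x
    rw [hw', combo_apply, map_sum, hW, combo_apply]
    congr 1; funext a
    rw [map_smul, hsig_vec]
  refine ⟨⟨l, N', C', p', w', fun x => by rw [hsigw', hgW], ?_⟩, ⟨T ∘ₗ s.w, ?_, ?_, ?_, ?_, ?_⟩, ?_, ?_⟩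
  · -- hNr
    intro j hj
    refine ⟨fun i : Fin N' => cr j i.1, ?_⟩
    rw [sig_trunc E (cr j) N']
    · exact hcr j
    · intro i hi
      calc i < ν j := Nat.lt_succ_of_le (Finset.le_sup (f := id) hi)
      _ ≤ (Finset.range C').sup ν := Finset.le_sup (Finset.mem_range.2 hj)
      _ ≤ N' := le_max_right _ _
  · -- comm
    intro x
    rw [LinearMap.comp_apply, hTp, hq, LinearMap.comp_apply, s.hlift]
  · -- compat
    intro x
    have heq : sig E N' (w' ((T ∘ₗ s.w) x)) - sig E s.N (s.w x) = D x := by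
      rw [hsigw', hD]
      simp only [LinearMap.sub_apply, LinearMap.comp_apply]
    rw [heq, lin_eq_combo D x]
    refine Submodule.sum_mem _ (fun i _ => Submodule.smul_mem _ _ ?_)
    refine span_image_Iio_mono r ?_ (hB i)
    exact le_trans (Finset.le_sup (f := B) (Finset.mem_univ i)) (le_max_right _ _)
  · -- kills
    intro x hx
    set c : Fin s.N → R := s.w x with hc
    rw [mem_span_set'] at hx
    obtain ⟨n, fc, gm, hsum⟩ := hx
    have hgm : ∀ i : Fin n, ∃ jj, jj < s.C ∧ r jj = (gm i : κ₀ →₀ R) := by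
      intro i
      rcases (gm i).2 with ⟨jj, hjj, hr⟩
      exact ⟨jj, hjj, hr⟩
    choose jf hjf1 hjf2 using hgm
    set c₂ : Fin s.N → R := ∑ i, fc i • ρ ⟨jf i, hjf1 i⟩ with hc₂
    have hker : sig (R := R) E s.N (c - c₂) = 0 := by
      rw [map_sub, hc₂, map_sum]
      have : ∀ i : Fin n, sig (R := R) E s.N (fc i • ρ ⟨jf i, hjf1 i⟩)
          = fc i • (gm i : κ₀ →₀ R) := by
        intro i
        rw [map_smul, hρ ⟨jf i, hjf1 i⟩, hjf2 i]
      rw [Finset.sum_congr rfl (fun i _ => this i), hsum]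
      exact sub_self _
    have hdec := ker_sig_decomp E (c - c₂) hker
    have hTc : T c = T c₂ + T (c - c₂) := by rw [← map_add]; congr 1; abel
    rw [LinearMap.comp_apply, ← hc, hTc, hdec, hc₂, map_sum, map_sum]
    rw [Finset.sum_eq_zero, Finset.sum_eq_zero, add_zero]
    · intro i _
      rw [map_smul, hTv, smul_zero]
    · intro i _
      rw [map_smul, hTρ, smul_zero]
  · -- surj
    intro i
    have h1 : q (Pi.single i 1) = g (uu E i.1) := by
      rw [hq, LinearMap.comp_apply]
      congr 1
      exact combo_single _ i
    rw [← h1, ← hTp]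
    exact ⟨T (Pi.single i 1), rfl⟩
  · -- hC
    exact le_trans (le_max_right b s.C) (le_max_left _ _)
  · exact le_trans (le_max_left b N₁) (le_max_left _ _)
  · exact le_trans (le_max_left b s.C) (le_max_left _ _)

end Pres2

end Stmt8Aux
namespace Stmt8Aux

open Submodule Set

variable {R : Type u} [Ring R] {M : Type v} [AddCommGroup M] [Module R M]

/-- All the data of a countable presentation of a flat module. -/
structure Setup (R : Type u) [Ring R] (M : Type v) [AddCommGroup M] [Module R M]
    (κ₀ : Type) : Type (max u v) where
  E : ℕ → κ₀
  g : (κ₀ →₀ R) →ₗ[R] M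
  r : ℕ → (κ₀ →₀ R)
  hflat : IsFlatModule R M
  hg : Function.Surjective g
  hE : Function.Surjective E
  hrk : ∀ j, g (r j) = 0
  hrs : LinearMap.ker g ≤ span R (Set.range r)

variable {κ₀ : Type} {Q : Setup R M κ₀}
variable (Q)

noncomputable def nextSt (s : St Q.E Q.g Q.r) (b : ℕ) :
    Σ' (s' : St Q.E Q.g Q.r), Σ' _ : Trans Q.E Q.g Q.r s s', b ≤ s'.N ∧ b ≤ s'.C :=
  ⟨(step Q.E Q.g Q.r Q.hflat Q.hg Q.hE Q.hrk Q.hrs s b).choose,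
   (step Q.E Q.g Q.r Q.hflat Q.hg Q.hE Q.hrk Q.hrs s b).choose_spec.choose,
   (step Q.E Q.g Q.r Q.hflat Q.hg Q.hE Q.hrk Q.hrs s b).choose_spec.choose_spec⟩

noncomputable def SS : ℕ → St Q.E Q.g Q.r :=
  fun n => Nat.rec (base Q.E Q.g Q.r) (fun n s => (nextSt Q s (n+1)).1) n

noncomputable def TT (n : ℕ) : Trans Q.E Q.g Q.r (SS Q n) (SS Q (n+1)) :=
  (nextSt Q (SS Q n) (n+1)).2.1

lemma SS_N (n : ℕ) : n + 1 ≤ (SS Q (n+1)).N :=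
  (nextSt Q (SS Q n) (n+1)).2.2.1

lemma SS_C (n : ℕ) : n + 1 ≤ (SS Q (n+1)).C :=
  (nextSt Q (SS Q n) (n+1)).2.2.2

lemma SS_C_mono (a d : ℕ) : (SS Q a).C ≤ (SS Q (a+d)).C := by
  induction d with
  | zero => exact le_refl _
  | succ d ih => exact le_trans ih (TT Q (a+d)).hC

/-- Composite transition maps. -/
noncomputable def Tstep (n : ℕ) : ∀ d : ℕ, (Fin (SS Q n).k → R) →ₗ[R] (Fin (SS Q (n+d)).k → R)
  | 0 => LinearMap.id
  | d+1 => (TT Q (n+d)).t ∘ₗ Tstep n d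

lemma Tstep_succ (n d : ℕ) (x : Fin (SS Q n).k → R) :
    Tstep Q n (d+1) x = (TT Q (n+d)).t (Tstep Q n d x) := rfl

lemma p_Tstep (n d : ℕ) (x : Fin (SS Q n).k → R) :
    (SS Q (n+d)).p (Tstep Q n d x) = (SS Q n).p x := by
  induction d with
  | zero => rfl
  | succ d ih =>
    show (SS Q (n+d+1)).p ((TT Q (n+d)).t (Tstep Q n d x)) = (SS Q n).p x
    rw [(TT Q (n+d)).comm, ih]

/-- Every kernel element eventually dies. -/
lemma death (n : ℕ) (x : Fin (SS Q n).k → R) (hx : (SS Q n).p x = 0) :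
    ∃ d, Tstep Q n d x = 0 := by
  have h0 : sig Q.E (SS Q n).N ((SS Q n).w x) ∈ LinearMap.ker Q.g := by
    rw [LinearMap.mem_ker, (SS Q n).hlift]
    exact hx
  obtain ⟨i₀, hi₀⟩ := exists_bound_of_mem_span Q.r (Q.hrs h0)
  have inv : ∀ d, sig Q.E (SS Q (n+d)).N ((SS Q (n+d)).w (Tstep Q n d x))
      ∈ span R (Q.r '' Set.Iio (max i₀ (SS Q (n+d)).C)) := by
    intro d
    induction d with
    | zero =>
      exact span_image_Iio_mono Q.r (le_max_left _ _) hi₀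
    | succ d ih =>
      have hdiff := (TT Q (n+d)).compat (Tstep Q n d x)
      have hsplit : sig Q.E (SS Q (n+d+1)).N ((SS Q (n+d+1)).w (Tstep Q n (d+1) x))
          = (sig Q.E (SS Q (n+d+1)).N ((SS Q (n+d+1)).w ((TT Q (n+d)).t (Tstep Q n d x)))
            - sig Q.E (SS Q (n+d)).N ((SS Q (n+d)).w (Tstep Q n d x)))
            + sig Q.E (SS Q (n+d)).N ((SS Q (n+d)).w (Tstep Q n d x)) := by
        rw [Tstep_succ]; abel
      show sig Q.E (SS Q (n+d+1)).N ((SS Q (n+d+1)).w (Tstep Q n (d+1) x))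
          ∈ span R (Q.r '' Set.Iio (max i₀ (SS Q (n+d+1)).C))
      rw [hsplit]
      refine Submodule.add_mem _ ?_ ?_
      · exact span_image_Iio_mono Q.r (le_max_right _ _) hdiff
      · exact span_image_Iio_mono Q.r
          (max_le_max (le_refl i₀) (TT Q (n+d)).hC) ih
  set d := i₀ + 1 with hd
  have hC : i₀ ≤ (SS Q (n+d)).C := by
    have h1 := SS_C Q (n + i₀)
    have : n + i₀ + 1 = n + d := by omega
    rw [this] at h1
    omega
  have hy : sig Q.E (SS Q (n+d)).N ((SS Q (n+d)).w (Tstep Q n d x))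
      ∈ span R (Q.r '' Set.Iio (SS Q (n+d)).C) := by
    have h2 := inv d
    rwa [max_eq_right hC] at h2
  exact ⟨d+1, by rw [Tstep_succ]; exact (TT Q (n+d)).kills _ hy⟩

lemma surj_item (i : ℕ) : Q.g (uu Q.E i) ∈ LinearMap.range (SS Q (i+2)).p := by
  have hN := SS_N Q i
  exact (TT Q (i+1)).surj ⟨i, by omega⟩

/-- Index-cast for the approximating modules. -/
noncomputable def castL {a b : ℕ} (h : a = b) :
    (Fin (SS Q a).k → R) →ₗ[R] (Fin (SS Q b).k → R) := h ▸ LinearMap.id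

/-- The telescope construction: the short exact sequence over `Type u`. -/
lemma main_aux (Q : Setup R M κ₀) : ∃ (P : Type u) (_ : AddCommGroup P) (_ : Module R P),
    Module.Projective R P ∧ ∃ (ι : P →ₗ[R] P) (π : P →ₗ[R] M),
      Function.Injective ι ∧ Function.Surjective π ∧ LinearMap.range ι = LinearMap.ker π := by
  classical
  set D := DirectSum ℕ (fun m => Fin ((SS Q m).k) → R) with hD
  set lofm : ∀ m : ℕ, (Fin ((SS Q m).k) → R) →ₗ[R] D :=
    fun m => DirectSum.lof R ℕ (fun m => Fin ((SS Q m).k) → R) m with hlofm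
  set shift : D →ₗ[R] D :=
    DirectSum.toModule R ℕ D (fun m => (lofm (m+1)) ∘ₗ (TT Q m).t) with hshift
  set π : D →ₗ[R] M := DirectSum.toModule R ℕ M (fun m => (SS Q m).p) with hπ
  set ι : D →ₗ[R] D := LinearMap.id - shift with hι
  have hπlof : ∀ (m : ℕ) a, π (lofm m a) = (SS Q m).p a := by
    intro m a
    exact DirectSum.toModule_lof R (M := fun m => Fin ((SS Q m).k) → R) m a
  have hshiftlof : ∀ (m : ℕ) a, shift (lofm m a) = lofm (m+1) ((TT Q m).t a) := by
    intro m a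
    exact DirectSum.toModule_lof R (M := fun m => Fin ((SS Q m).k) → R) m a
  have hsame : ∀ (m' : ℕ) (b : Fin ((SS Q m').k) → R), (lofm m' b) m' = b := by
    intro m' b
    rw [hlofm]
    exact DirectSum.lof_apply (M := fun m => Fin ((SS Q m).k) → R) R m' b
  have hne : ∀ (m' n' : ℕ) (b : Fin ((SS Q m').k) → R), m' ≠ n' → (lofm m' b) n' = 0 := by
    intro m' n' b hmn
    rw [hlofm]
    exact DirectSum.of_eq_of_ne (β := fun m => Fin ((SS Q m).k) → R) m' n' b hmn.symm
  -- components of shift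
  have hcomp : ∀ x : D, (shift x) 0 = 0 ∧ ∀ n, (shift x) (n+1) = (TT Q n).t (x n) := by
    intro x
    refine DirectSum.induction_on x ?_ ?_ ?_
    · constructor <;> simp
    · intro m a
      have hof : (DirectSum.of (fun m => Fin ((SS Q m).k) → R) m) a = lofm m a := rfl
      rw [hof, hshiftlof]
      constructor
      · exact hne (m+1) 0 _ (by omega)
      · intro n
        by_cases hmn : m = n
        · subst hmn
          rw [hsame, hsame]
        · rw [hne (m+1) (n+1) _ (by omega), hne m n _ hmn, map_zero]
    · intro a b ha hb
      constructor
      · rw [map_add, DirectSum.add_apply, ha.1, hb.1, add_zero]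
      · intro n
        rw [map_add, DirectSum.add_apply, DirectSum.add_apply, ha.2, hb.2, map_add]
  -- ι is injective
  have hinj : Function.Injective ι := by
    have hker : ∀ x : D, ι x = 0 → x = 0 := by
      intro x hx
      have hfix : x = shift x := by
        have : x - shift x = 0 := by
          rw [hι] at hx
          simpa using hx
        exact (sub_eq_zero.1 this)
      have hzero : ∀ n, x n = 0 := by
        intro n
        induction n with
        | zero => rw [hfix]; exact (hcomp x).1
        | succ n ih =>
          conv_lhs => rw [hfix]
          rw [(hcomp x).2 n, ih, map_zero]
      exact DFinsupp.ext hzero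
    intro a b hab
    have : ι (a - b) = 0 := by rw [map_sub, hab, sub_self]
    have := hker _ this
    exact sub_eq_zero.1 this
  -- π ∘ shift = π
  have hπshift : ∀ y : D, π (shift y) = π y := by
    have : π ∘ₗ shift = π := by
      refine DirectSum.linearMap_ext R (fun m => ?_)
      refine LinearMap.ext (fun a => ?_)
      simp only [LinearMap.comp_apply]
      have h2 : π (shift (lofm m a)) = π (lofm m a) := by
        rw [hshiftlof, hπlof, hπlof, (TT Q m).comm]
      exact h2
    intro y
    exact congrArg (fun f : D →ₗ[R] M => f y) this
  -- range ι ≤ ker π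
  have hsub : ∀ y : D, π (ι y) = 0 := by
    intro y
    rw [hι, LinearMap.sub_apply, map_sub, LinearMap.id_apply, hπshift, sub_self]
  -- pushing down
  have hpush : ∀ (n d : ℕ) (a : Fin ((SS Q n).k) → R),
      lofm n a - lofm (n+d) (Tstep Q n d a) ∈ LinearMap.range ι := by
    intro n d a
    induction d with
    | zero =>
      have h0 : lofm (n+0) (Tstep Q n 0 a) = lofm n a := rfl
      rw [h0, sub_self]
      exact zero_mem _
    | succ d ih =>
      have h1 : lofm (n+d) (Tstep Q n d a) - lofm (n+d+1) (Tstep Q n (d+1) a)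
          ∈ LinearMap.range ι := by
        refine ⟨lofm (n+d) (Tstep Q n d a), ?_⟩
        rw [hι, LinearMap.sub_apply, LinearMap.id_apply, hshiftlof, Tstep_succ]
      have := Submodule.add_mem _ ih h1
      rw [sub_add_sub_cancel] at this; exact this
  have hcast_lof : ∀ {a b : ℕ} (h : a = b) (y : Fin ((SS Q a).k) → R),
      lofm b (castL Q h y) = lofm a y := by
    intro a b h y
    subst h
    rfl
  have hcast_p : ∀ {a b : ℕ} (h : a = b) (y : Fin ((SS Q a).k) → R),
      (SS Q b).p (castL Q h y) = (SS Q a).p y := by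
    intro a b h y
    subst h
    rfl
  -- reduction to a single component
  have hreduce : ∀ x : D, ∃ (m : ℕ) (y : Fin ((SS Q m).k) → R),
      π x = (SS Q m).p y ∧ x - lofm m y ∈ LinearMap.range ι := by
    intro x
    refine DirectSum.induction_on x ?_ ?_ ?_
    · exact ⟨0, 0, by simp, by simp⟩
    · intro m a
      refine ⟨m, a, ?_, ?_⟩
      · exact hπlof m a
      · have h0 : (DirectSum.of (fun m => Fin ((SS Q m).k) → R) m) a = lofm m a := rfl
        rw [h0, sub_self]
        exact zero_mem _
    · rintro x₁ x₂ ⟨m₁, y₁, hp₁, hr₁⟩ ⟨m₂, y₂, hp₂, hr₂⟩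
      obtain ⟨d₁, hd₁⟩ := Nat.le.dest (le_max_left m₁ m₂)
      obtain ⟨d₂, hd₂⟩ := Nat.le.dest (le_max_right m₁ m₂)
      set m := max m₁ m₂ with hm
      set y₁' := castL Q hd₁ (Tstep Q m₁ d₁ y₁) with hy₁'
      set y₂' := castL Q hd₂ (Tstep Q m₂ d₂ y₂) with hy₂'
      refine ⟨m, y₁' + y₂', ?_, ?_⟩
      · rw [map_add, map_add, hp₁, hp₂, hy₁', hy₂', hcast_p, hcast_p, p_Tstep, p_Tstep]
      · have e₁ : x₁ - lofm m y₁' ∈ LinearMap.range ι := by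
          rw [hy₁', hcast_lof]
          have := Submodule.add_mem _ hr₁ (hpush m₁ d₁ y₁)
          simpa using this
        have e₂ : x₂ - lofm m y₂' ∈ LinearMap.range ι := by
          rw [hy₂', hcast_lof]
          have := Submodule.add_mem _ hr₂ (hpush m₂ d₂ y₂)
          simpa using this
        have := Submodule.add_mem _ e₁ e₂
        rw [map_add]
        convert this using 1
        abel
  -- surjectivity of π
  have hπsurj : Function.Surjective π := by
    have htop : span R (Set.range (fun i => Q.g (uu Q.E i))) = ⊤ := by
      have h1 : Submodule.map Q.g (span R (Set.range (uu Q.E (R := R)))) =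
          span R (Q.g '' Set.range (uu Q.E (R := R))) := map_span Q.g _
      rw [span_uu_top Q.E Q.hE, Submodule.map_top, LinearMap.range_eq_top.2 Q.hg] at h1
      rw [← Set.range_comp] at h1
      exact h1.symm
    intro m₀
    have hm₀ : m₀ ∈ span R (Set.range (fun i => Q.g (uu Q.E i))) := by
      rw [htop]; trivial
    have hle : span R (Set.range (fun i => Q.g (uu Q.E i))) ≤ LinearMap.range π := by
      refine span_le.2 ?_
      rintro _ ⟨i, rfl⟩
      obtain ⟨a, ha⟩ := surj_item Q i
      exact ⟨lofm (i+2) a, by rw [hπlof, ha]⟩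
    exact hle hm₀
  -- exactness
  refine ⟨D, inferInstance, inferInstance, inferInstance, ι, π, hinj, hπsurj, ?_⟩
  apply le_antisymm
  · rintro _ ⟨y, rfl⟩
    exact LinearMap.mem_ker.2 (hsub y)
  · intro x hx
    obtain ⟨m, y, hπx, hxr⟩ := hreduce x
    have hy0 : (SS Q m).p y = 0 := by rw [← hπx]; exact LinearMap.mem_ker.1 hx
    obtain ⟨d, hd⟩ := death Q m y hy0
    have h1 : lofm m y ∈ LinearMap.range ι := by
      have := hpush m d y
      rw [hd, map_zero, sub_zero] at this
      exact this
    have := Submodule.add_mem _ hxr h1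
    simpa using this

end Stmt8Aux
/-- Every countably presented flat module has projective dimension at most `1`:
there is a short exact sequence `0 → P₁ → P₀ → M → 0` with `P₀`, `P₁` projective. -/
theorem stmt8 (R : Type u) [Ring R] (M : Type v) [AddCommGroup M] [Module R M]
    (hflat : IsFlatModule R M)
    (hcp : ∃ (κ₀ κ₁ : Type) (_ : Countable κ₀) (_ : Countable κ₁)
      (f : (κ₁ →₀ R) →ₗ[R] (κ₀ →₀ R)) (g : (κ₀ →₀ R) →ₗ[R] M),
      Function.Surjective g ∧ LinearMap.range f = LinearMap.ker g) :
    ∃ (P₁ P₀ : Type (max u v)) (_ : AddCommGroup P₁) (_ : AddCommGroup P₀)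
      (_ : Module R P₁) (_ : Module R P₀),
      Module.Projective R P₁ ∧ Module.Projective R P₀ ∧
      ∃ (ι : P₁ →ₗ[R] P₀) (π : P₀ →ₗ[R] M),
        Function.Injective ι ∧ Function.Surjective π ∧
        LinearMap.range ι = LinearMap.ker π := by
  classical
  obtain ⟨κ₀, κ₁, hc₀, hc₁, f, g, hg, hfg⟩ := hcp
  rcases isEmpty_or_nonempty κ₀ with hem | hne
  · -- M is trivial
    have hM0 : ∀ m : M, m = 0 := by
      intro m
      obtain ⟨y, rfl⟩ := hg m
      have hy : y = 0 := Finsupp.ext (fun a => (hem.elim a))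
      rw [hy, map_zero]
    refine ⟨ULift.{v} R, ULift.{v} R, inferInstance, inferInstance, inferInstance,
      inferInstance, Module.Projective.of_equiv (ULift.moduleEquiv (R := R) (M := R)).symm,
      Module.Projective.of_equiv (ULift.moduleEquiv (R := R) (M := R)).symm,
      LinearMap.id, 0, fun a b h => h, ?_, ?_⟩
    · intro m
      exact ⟨0, (hM0 m).symm⟩
    · rw [LinearMap.range_id, LinearMap.ker_zero]
  · -- get an enumeration of κ₀
    obtain ⟨E, hE⟩ := exists_surjective_nat κ₀
    -- get relation enumeration
    have hrel : ∃ r : ℕ → (κ₀ →₀ R), (∀ j, g (r j) = 0) ∧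
        LinearMap.ker g ≤ Submodule.span R (Set.range r) := by
      rcases isEmpty_or_nonempty κ₁ with hem₁ | hne₁
      · refine ⟨fun _ => 0, fun j => map_zero g, ?_⟩
        intro x hx
        rw [← hfg] at hx
        obtain ⟨z, rfl⟩ := hx
        have hz : z = 0 := Finsupp.ext (fun a => (hem₁.elim a))
        rw [hz, map_zero]
        exact zero_mem _
      · obtain ⟨E₁, hE₁⟩ := exists_surjective_nat κ₁
        refine ⟨fun j => f (Finsupp.single (E₁ j) 1), ?_, ?_⟩
        · intro j
          have : f (Finsupp.single (E₁ j) 1) ∈ LinearMap.ker g := by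
            rw [← hfg]; exact ⟨_, rfl⟩
          exact LinearMap.mem_ker.1 this
        · intro x hx
          rw [← hfg] at hx
          obtain ⟨z, rfl⟩ := hx
          have hz : z ∈ Submodule.span R (Set.range (fun a : κ₁ => Finsupp.single a (1 : R))) := by
            have hb := Module.Basis.span_eq (Finsupp.basisSingleOne (R := R) (ι := κ₁))
            rw [Finsupp.coe_basisSingleOne] at hb
            rw [hb]
            trivial
          have hmap := Submodule.map_span f (Set.range (fun a : κ₁ => Finsupp.single a (1 : R)))
          have hz2 : f z ∈ Submodule.span R (f '' Set.range (fun a : κ₁ => Finsupp.single a (1 : R))) := by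
            rw [← hmap]
            exact Submodule.mem_map_of_mem hz
          refine Submodule.span_le.2 ?_ hz2
          rintro _ ⟨_, ⟨a, rfl⟩, rfl⟩
          obtain ⟨j, rfl⟩ := hE₁ a
          exact Submodule.subset_span ⟨j, rfl⟩
    obtain ⟨r, hrk, hrs⟩ := hrel
    -- run the construction
    set Q : Stmt8Aux.Setup R M κ₀ := ⟨E, g, r, hflat, hg, hE, hrk, hrs⟩ with hQ
    obtain ⟨P, instAG, instMod, hproj, ι, π, hinj, hsurj, hex⟩ := Stmt8Aux.main_aux Q
    -- lift the universe
    refine ⟨ULift.{v} P, ULift.{v} P, inferInstance, inferInstance, inferInstance,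
      inferInstance, ?_, ?_, ?_⟩
    · exact Module.Projective.of_equiv (ULift.moduleEquiv (R := R) (M := P)).symm
    · exact Module.Projective.of_equiv (ULift.moduleEquiv (R := R) (M := P)).symm
    set e : ULift.{v} P ≃ₗ[R] P := ULift.moduleEquiv with he
    refine ⟨e.symm.toLinearMap ∘ₗ ι ∘ₗ e.toLinearMap, π ∘ₗ e.toLinearMap, ?_, ?_, ?_⟩
    · intro a b hab
      simp only [LinearMap.comp_apply, LinearEquiv.coe_coe] at hab
      have h1 := e.symm.injective hab
      have h2 := hinj h1
      exact e.injective h2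
    · intro m
      obtain ⟨x, hx⟩ := hsurj m
      exact ⟨e.symm x, by simp [LinearMap.comp_apply, hx]⟩
    · ext x
      simp only [LinearMap.mem_range, LinearMap.mem_ker, LinearMap.comp_apply,
        LinearEquiv.coe_coe]
      constructor
      · rintro ⟨z, rfl⟩
        simp only [LinearEquiv.apply_symm_apply]
        have : ι (e z) ∈ LinearMap.ker π := by
          rw [← hex]; exact ⟨e z, rfl⟩
        exact LinearMap.mem_ker.1 this
      · intro hx
        have : e x ∈ LinearMap.ker π := LinearMap.mem_ker.2 hx
        rw [← hex] at this
        obtain ⟨z, hz⟩ := this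
        refine ⟨e.symm z, ?_⟩
        rw [LinearEquiv.apply_symm_apply, hz]
        exact e.symm_apply_apply x
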